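/- Let H ∈ H(μ,ν,λ) be an h-array with the standard boundary conditions and let T1 = (x_j^{(i)}) and T2 = (y_j^{(i)}) be its derived t-arrays. Then T1 satisfies the interlacing condition IC(1) (x_j^{(i+1)} ≥ x_j^{(i)}) if and only if T2 satisfies the exponent bound ε_j^{(i)}(T2) ≤ μ_i - μ_{i+1} for all i, j, where ε_j^{(i)}(T) = Σ_{1≤h<j} (t_h^{(i+1)} - 2t_h^{(i)} + t_h^{(i-1)}) + (t_j^{(i+1)} - t_j^{(i)}). -/

import Mathlib

open Finset

/-- Interlacing condition IC(1): `t_j^(i+1) ≥ t_j^(i)` for `1 ≤ j ≤ i ≤ n-1`. -/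
def IsIC1 (n : ℕ) (t : ℕ → ℕ → ℤ) : Prop :=
  ∀ i j : ℕ, 1 ≤ j → j ≤ i → i + 1 ≤ n → t i j ≤ t (i + 1) j

/-- Interlacing condition IC(2): `t_j^(i) ≥ t_{j+1}^(i+1)`. -/
def IsIC2 (n : ℕ) (t : ℕ → ℕ → ℤ) : Prop :=
  ∀ i j : ℕ, 1 ≤ j → j ≤ i → i + 1 ≤ n → t (i + 1) (j + 1) ≤ t i j

/-- Rhombus condition RC(1): `h_{a,b} + h_{a-1,b-1} ≥ h_{a-1,b} + h_{a,b-1}` for `1 ≤ a < b ≤ n`. -/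
def IsRC1 (n : ℕ) (h : ℕ → ℕ → ℤ) : Prop :=
  ∀ a b : ℕ, 1 ≤ a → a < b → b ≤ n →
    h (a - 1) b + h a (b - 1) ≤ h a b + h (a - 1) (b - 1)

/-- Rhombus condition RC(2): `h_{a-1,b} + h_{a,b} ≥ h_{a,b+1} + h_{a-1,b-1}` for `1 ≤ a ≤ b < n`. -/
def IsRC2 (n : ℕ) (h : ℕ → ℕ → ℤ) : Prop :=
  ∀ a b : ℕ, 1 ≤ a → a ≤ b → b < n →
    h a (b + 1) + h (a - 1) (b - 1) ≤ h (a - 1) b + h a b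

/-- Rhombus condition RC(3): `h_{a,b} + h_{a,b+1} ≥ h_{a+1,b+1} + h_{a-1,b}` for `1 ≤ a ≤ b < n`. -/
def IsRC3 (n : ℕ) (h : ℕ → ℕ → ℤ) : Prop :=
  ∀ a b : ℕ, 1 ≤ a → a ≤ b → b < n →
    h (a + 1) (b + 1) + h (a - 1) b ≤ h a b + h a (b + 1)

/-- First derived t-array `T1`: `x_{b+1-a}^{(n-a)} = h_{a,b+1} - h_{a,b}`,
so `x_j^(i) = h_{n-i, n-i+j} - h_{n-i, n-i+j-1}`. -/
def dT1 (n : ℕ) (h : ℕ → ℕ → ℤ) (i j : ℕ) : ℤ :=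
  h (n - i) (n - i + j) - h (n - i) (n - i + j - 1)

/-- Second derived t-array `T2`: `y_{a+1}^{(b+1)} = h_{a+1,b+1} - h_{a,b+1}`,
so `y_j^(i) = h_{j,i} - h_{j-1,i}`. -/
def dT2 (h : ℕ → ℕ → ℤ) (i j : ℕ) : ℤ :=
  h j i - h (j - 1) i

/-- Third derived t-array `T3`: `z_{a+1}^{(n+a-b)} = h_{a+1,b+1} - h_{a,b}`,
so `z_j^(i) = h_{j, n+j-i} - h_{j-1, n+j-1-i}`. -/
def dT3 (n : ℕ) (h : ℕ → ℕ → ℤ) (i j : ℕ) : ℤ :=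
  h j (n + j - i) - h (j - 1) (n + j - 1 - i)

/-- The dual t-array: `s_j^(i) = -t_{i+1-j}^(i)`. -/
def dualT (t : ℕ → ℕ → ℤ) (i j : ℕ) : ℤ := - t i (i + 1 - j)

/-- The weight of a t-array: `w_i = Σ_{k=1}^i t_k^(i) - Σ_{k=1}^{i-1} t_k^(i-1)`. -/
def wt (t : ℕ → ℕ → ℤ) (i : ℕ) : ℤ :=
  (∑ k ∈ Finset.Icc 1 i, t i k) - ∑ k ∈ Finset.Icc 1 (i - 1), t (i - 1) k

/-- The Gelfand–Zelevinsky exponent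
`ε_j^(i)(T) = Σ_{1 ≤ h < j} (t_h^(i+1) - 2 t_h^(i) + t_h^(i-1)) + (t_j^(i+1) - t_j^(i))`. -/
def expo (t : ℕ → ℕ → ℤ) (i j : ℕ) : ℤ :=
  (∑ h ∈ Finset.Icc 1 (j - 1), (t (i + 1) h - 2 * t i h + t (i - 1) h)) +
    (t (i + 1) j - t i j)

/-- Boundary conditions for an h-array in `H(μ,ν,λ)`. -/
def IsBoundary (n : ℕ) (mu nu lam : ℕ → ℤ) (h : ℕ → ℕ → ℤ) : Prop :=
  h 0 0 = 0 ∧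
  (∀ i, 1 ≤ i → i ≤ n → h 0 i = ∑ k ∈ Finset.Icc 1 i, mu k) ∧
  (∀ i, 1 ≤ i → i ≤ n →
    h i n = (∑ k ∈ Finset.Icc 1 n, mu k) + ∑ k ∈ Finset.Icc 1 i, nu k) ∧
  (∀ i, 1 ≤ i → i ≤ n → h i i = ∑ k ∈ Finset.Icc 1 i, lam k)

/-- A weakly decreasing sequence of nonnegative integers of length `n`
(a polynomial dominant weight). -/
def IsDomWeight (n : ℕ) (mu : ℕ → ℤ) : Prop :=
  (∀ i, 1 ≤ i → i + 1 ≤ n → mu (i + 1) ≤ mu i) ∧ (∀ i, 1 ≤ i → i ≤ n → 0 ≤ mu i)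

lemma telescope_aux (f : ℕ → ℤ) (m : ℕ) :
    ∑ k ∈ Finset.Icc 1 m, (f k - f (k - 1)) = f m - f 0 := by
  induction m with
  | zero => simp
  | succ m ih =>
    rw [Finset.sum_Icc_succ_top (by omega : 1 ≤ m + 1), ih]
    simp

lemma expo_dT2_eq (n : ℕ) (mu nu lam : ℕ → ℤ) (h : ℕ → ℕ → ℤ)
    (hbd : IsBoundary n mu nu lam h) (i j : ℕ) (hj : 1 ≤ j) (hji : j ≤ i)
    (hin : i + 1 ≤ n) :
    expo (dT2 h) i j
      = mu i - mu (i + 1)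
        + (h j (i + 1) + h (j - 1) (i - 1) - h j i - h (j - 1) i) := by
  have h0 : ∀ m, m ≤ n → h 0 m = ∑ k ∈ Finset.Icc 1 m, mu k := by
    intro m hm
    rcases Nat.eq_zero_or_pos m with rfl | hmpos
    · simpa using hbd.1
    · exact hbd.2.1 m hmpos hm
  have hsum : (∑ k ∈ Finset.Icc 1 (j - 1),
        (dT2 h (i + 1) k - 2 * dT2 h i k + dT2 h (i - 1) k))
      = (h (j - 1) (i + 1) - 2 * h (j - 1) i + h (j - 1) (i - 1))
        - (h 0 (i + 1) - 2 * h 0 i + h 0 (i - 1)) := by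
    have := telescope_aux (fun k => h k (i + 1) - 2 * h k i + h k (i - 1)) (j - 1)
    rw [← this]
    exact Finset.sum_congr rfl (fun k _ => by unfold dT2; ring)
  have e1 : h 0 (i + 1) - h 0 i = mu (i + 1) := by
    rw [h0 (i + 1) hin, h0 i (by omega),
      Finset.sum_Icc_succ_top (by omega : 1 ≤ i + 1)]
    ring
  have e2 : h 0 i - h 0 (i - 1) = mu i := by
    obtain ⟨i', rfl⟩ : ∃ i', i = i' + 1 := ⟨i - 1, by omega⟩
    simp only [Nat.add_sub_cancel]
    rw [h0 (i' + 1) (by omega), h0 i' (by omega),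
      Finset.sum_Icc_succ_top (by omega : 1 ≤ i' + 1)]
    ring
  unfold expo
  rw [hsum]
  unfold dT2
  linarith

/-- Proposition 3.4: `T1(H)` satisfies IC(1) iff the exponents of `T2(H)` are
bounded by `μ_i - μ_{i+1}`. -/
theorem ic1_dT1_iff_expo_dT2 (n : ℕ) (mu nu lam : ℕ → ℤ) (h : ℕ → ℕ → ℤ)
    (hmu : IsDomWeight n mu) (hnu : IsDomWeight n nu) (hlam : IsDomWeight n lam)
    (hbd : IsBoundary n mu nu lam h) :
    IsIC1 n (dT1 n h) ↔
      (∀ i j, 1 ≤ j → j ≤ i → i + 1 ≤ n →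
        expo (dT2 h) i j ≤ mu i - mu (i + 1)) := by
  constructor
  · intro hIC i j hj hji hin
    rw [expo_dT2_eq n mu nu lam h hbd i j hj hji hin]
    have h1 := hIC (n - j) (i + 1 - j) (by omega) (by omega) (by omega)
    unfold dT1 at h1
    have f1 : n - (n - j) = j := by omega
    have f2 : j + (i + 1 - j) = i + 1 := by omega
    have f4 : n - (n - j + 1) = j - 1 := by omega
    have f5 : j - 1 + (i + 1 - j) = i := by omega
    rw [f1, f2, f4, f5] at h1
    simp only [Nat.add_sub_cancel] at h1
    linarith
  · intro hE i j hj hji hin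
    have key := hE (n - i + j - 1) (n - i) (by omega) (by omega) (by omega)
    rw [expo_dT2_eq n mu nu lam h hbd _ _ (by omega) (by omega) (by omega)] at key
    unfold dT1
    have e1 : n - i + j - 1 + 1 = n - i + j := by omega
    have e2 : n - i - 1 = n - (i + 1) := by omega
    have e3 : n - i + j - 1 - 1 = n - (i + 1) + j - 1 := by omega
    have e4 : n - i + j - 1 = n - (i + 1) + j := by omega
    rw [e1, e2, e3, e4] at key
    rw [e4]
    linarith
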